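/- Let η ∈ W* with η_P ≠ 0, suppose there exists a Hamiltonian n-frame for η, and let S ⊆ Q be the n-dimensional subspace spanned by pr_Q X₁,…,pr_Q Xₙ for any Hamiltonian n-frame (X₁,…,Xₙ) for η (this subspace is independent of the choice of frame). Let a = λη + b∘pr_Q with λ ∈ ℝ and b ∈ Q*. Then: (1) a is nonvanishing on the linear span of every Hamiltonian n-frame for η if and only if the restriction of b to S is nonzero; (2) a vanishes identically on the linear span of every Hamiltonian n-frame for η if and only if b restricted to S is zero. In particular, η itself vanishes identically on the linear span of every Hamiltonian n-frame for η. -/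

import Mathlib

open ExteriorAlgebra

set_option synthInstance.maxHeartbeats 1000000
set_option maxHeartbeats 1000000

/-- The wedge `v₁ ∧ ⋯ ∧ vₙ` of `n` vectors, as an element of the `n`-th exterior power. -/
noncomputable def wedge {Q : Type*} [AddCommGroup Q] [Module ℝ Q] (n : ℕ) (v : Fin n → Q) :
    ⋀[ℝ]^n Q :=
  ⟨ExteriorAlgebra.ιMulti ℝ n v, ExteriorAlgebra.ιMulti_range ℝ n ⟨v, rfl⟩⟩

/-- The phase space `W = Q × P` with `Q = ℝ^(n+k)` and `P = (⋀ⁿQ)*`. -/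
abbrev phaseSpace (n k : ℕ) :=
  (Fin (n + k) → ℝ) × Module.Dual ℝ (⋀[ℝ]^n (Fin (n + k) → ℝ))

/-- The canonical multisymplectic form
`Ω(w₁,…,w_{n+1}) = Σᵢ (−1)^(i−1) πᵢ(ξ₁ ∧ ⋯ ∧ ξ̂ᵢ ∧ ⋯ ∧ ξ_{n+1})` on `W = Q × P`,
where `w_j = (ξ_j, π_j)`. -/
noncomputable def multisymp (n k : ℕ) (w : Fin (n + 1) → phaseSpace n k) : ℝ :=
  ∑ i : Fin (n + 1), (-1 : ℝ) ^ (i : ℕ) *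
    (w i).2 (wedge n (fun j => (w (i.succAbove j)).1))

/-- A Hamiltonian `n`-frame for a linear form `η` on `W`: an `n`-tuple `X` of vectors of `W`
with `X₁ ∧ ⋯ ∧ Xₙ ≠ 0` satisfying the Hamilton equation `Ω(X₁,…,Xₙ,Y) = (−1)ⁿ η(Y)`. -/
noncomputable def IsHamFrame (n k : ℕ) (η : Module.Dual ℝ (phaseSpace n k))
    (X : Fin n → phaseSpace n k) : Prop :=
  ExteriorAlgebra.ιMulti ℝ n X ≠ 0 ∧
    ∀ Y : phaseSpace n k,
      multisymp n k (Fin.snoc X Y : Fin (n + 1) → phaseSpace n k) = (-1 : ℝ) ^ n * η Y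



-- Aux 4: ιMulti of a linearly independent family is nonzero.
lemma ιMulti_ne_zero_of_linearIndependent {Q : Type*} [AddCommGroup Q] [Module ℝ Q]
    {n : ℕ} {v : Fin n → Q} (hv : LinearIndependent ℝ v) :
    ExteriorAlgebra.ιMulti ℝ n v ≠ 0 := by
  classical
  have hv' := hv.linearIndepOn_id
  set B := Module.Basis.extend hv' with hB
  have hmem : ∀ i, v i ∈ hv'.extend (Set.subset_univ _) :=
    fun i => hv'.subset_extend _ (Set.mem_range_self i)
  set f : Fin n → Module.Dual ℝ Q := fun i => B.coord ⟨v i, hmem i⟩ with hf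
  have hfv : ∀ i j, f i (v j) = if j = i then 1 else 0 := by
    intro i j
    have : v j = B ⟨v j, hmem j⟩ := (Module.Basis.extend_apply_self hv' ⟨v j, hmem j⟩).symm
    rw [hf]; conv_lhs => rw [this]
    rw [Module.Basis.coord_apply, Module.Basis.repr_self]
    rw [Finsupp.single_apply]
    by_cases h : j = i
    · simp [h]
    · rw [if_neg, if_neg h]
      intro hc
      exact h (hv.injective (by simpa using Subtype.ext_iff.mp hc))
  set φ : Q [⋀^Fin n]→ₗ[ℝ] ℝ :=
    (Matrix.detRowAlternating).compLinearMap (LinearMap.pi f) with hφ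
  have hφv : φ v = 1 := by
    rw [hφ]
    rw [AlternatingMap.compLinearMap_apply]
    have : (fun j => (LinearMap.pi f) (v j)) = (1 : Matrix (Fin n) (Fin n) ℝ) := by
      funext j i
      simp only [LinearMap.pi_apply, hfv, Matrix.one_apply]
    rw [Matrix.detRowAlternating]
    show Matrix.det (Matrix.of fun j => (LinearMap.pi f) (v j)) = 1
    rw [show (Matrix.of fun j => (LinearMap.pi f) (v j)) = 1 from by ext j i; exact congrFun (congrFun this j) i]
    simp
  intro h0
  have := ExteriorAlgebra.liftAlternating_apply_ιMulti
    (Function.update (fun m => (0 : Q [⋀^Fin m]→ₗ[ℝ] ℝ)) n φ) v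
  rw [h0, Function.update_self, hφv] at this
  simp at this


lemma snoc_succAbove_perm {M : Type*} (n : ℕ) (i₀ : Fin n) (v : Fin n → M) :
    ∃ σ : Equiv.Perm (Fin n), Equiv.Perm.sign σ = (-1) ^ ((n - 1) - (i₀ : ℕ)) ∧
      (fun j => (Fin.snoc v (v i₀) : Fin (n+1) → M) ((Fin.castSucc i₀).succAbove j))
        = v ∘ σ := by
  have hn : 0 < n := i₀.pos
  obtain ⟨m, rfl⟩ : ∃ m, n = m + 1 := ⟨n - 1, by omega⟩
  set τ : Equiv.Perm (Fin (m+1)) := Fin.revPerm * (Fin.rev i₀).cycleRange * Fin.revPerm with hτ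
  have hτval : ∀ x : Fin (m+1), ((τ x : Fin (m+1)) : ℕ) =
      if (x : ℕ) < (i₀ : ℕ) then (x : ℕ)
      else if (x : ℕ) = (i₀ : ℕ) then m else (x : ℕ) - 1 := by
    intro x
    have hx : (Fin.rev x : ℕ) = m - (x : ℕ) := by rw [Fin.val_rev]; omega
    have hi : (Fin.rev i₀ : ℕ) = m - (i₀ : ℕ) := by rw [Fin.val_rev]; omega
    rw [hτ]
    simp only [Equiv.Perm.mul_apply, Fin.revPerm_apply]
    rcases lt_trichotomy ((x : ℕ)) ((i₀ : ℕ)) with h | h | h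
    · rw [Fin.cycleRange_of_gt, Fin.rev_rev, if_pos h]
      rw [Fin.lt_iff_val_lt_val, hx, hi]; omega
    · have : Fin.rev x = Fin.rev i₀ := by apply Fin.ext; rw [hx, hi, h]
      rw [this, Fin.cycleRange_self, if_neg (by omega), if_pos h, Fin.val_rev]
      simp
    · rw [Fin.cycleRange_of_lt (by rw [Fin.lt_iff_val_lt_val, hx, hi]; omega)]
      rw [if_neg (by omega), if_neg (by omega), Fin.val_rev]
      have : ((Fin.rev x + 1 : Fin (m+1)) : ℕ) = m - (x : ℕ) + 1 := by
        rw [Fin.val_add_one_of_lt]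
        · rw [hx]
        · rw [Fin.lt_iff_val_lt_val, hx, Fin.val_last]; omega
      rw [this]; omega
  have huinv : ∀ u : ℤˣ, u⁻¹ = u := fun u => by
    rcases Int.units_eq_one_or u with h | h <;> simp [h]
  refine ⟨τ⁻¹, ?_, ?_⟩
  · rw [map_inv, huinv, hτ, map_mul, map_mul, Fin.sign_cycleRange]
    rw [mul_comm (Equiv.Perm.sign (Fin.revPerm : Equiv.Perm (Fin (m+1)))), mul_assoc, ← sq,
      Int.units_sq, mul_one, Fin.val_rev]
    congr 1
    omega
  · funext j
    have hstep : ∀ s : Fin (m+1), j = τ s → τ⁻¹ j = s := by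
      intro s h; rw [h]; simp
    show (Fin.snoc v (v i₀) : Fin (m+2) → M) ((Fin.castSucc i₀).succAbove j) = v (τ⁻¹ j)
    rcases lt_trichotomy ((j : ℕ)) ((i₀ : ℕ)) with h | h | h
    · rw [Fin.succAbove_of_castSucc_lt _ _ (by
        rw [Fin.castSucc_lt_castSucc_iff, Fin.lt_iff_val_lt_val]; exact h)]
      rw [Fin.snoc_castSucc, hstep j (by
        apply Fin.ext; rw [hτval, if_pos h])]
    · -- j = i₀ (value-wise)
      rw [Fin.succAbove_of_le_castSucc _ _ (by
        rw [Fin.castSucc_le_castSucc_iff, Fin.le_iff_val_le_val]; omega)]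
      by_cases hj : (j : ℕ) = m
      · have hsucc : Fin.succ j = Fin.last (m+1) := by apply Fin.ext; simp [hj]
        rw [hsucc, Fin.snoc_last, hstep i₀ (by
          apply Fin.ext; rw [hτval]
          rw [if_neg (by omega), if_pos rfl]; omega)]
      · have hsucc : Fin.succ j = Fin.castSucc ⟨min ((j : ℕ) + 1) m, by omega⟩ := by
          apply Fin.ext
          rw [Fin.val_succ, Fin.coe_castSucc]
          show (j : ℕ) + 1 = min ((j : ℕ) + 1) m
          have := j.isLt; omega
        rw [hsucc, Fin.snoc_castSucc, hstep ⟨min ((j : ℕ) + 1) m, by omega⟩ (by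
          apply Fin.ext; rw [hτval]
          show (j : ℕ) = if min ((j : ℕ) + 1) m < (i₀ : ℕ) then min ((j : ℕ) + 1) m
            else if min ((j : ℕ) + 1) m = (i₀ : ℕ) then m else min ((j : ℕ) + 1) m - 1
          have := j.isLt
          rw [if_neg (by omega), if_neg (by omega)]; omega)]
    · rw [Fin.succAbove_of_le_castSucc _ _ (by
        rw [Fin.castSucc_le_castSucc_iff, Fin.le_iff_val_le_val]; omega)]
      by_cases hj : (j : ℕ) = m
      · have hsucc : Fin.succ j = Fin.last (m+1) := by apply Fin.ext; simp [hj]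
        rw [hsucc, Fin.snoc_last, hstep i₀ (by
          apply Fin.ext; rw [hτval]
          rw [if_neg (by omega), if_pos rfl]; omega)]
      · have hsucc : Fin.succ j = Fin.castSucc ⟨min ((j : ℕ) + 1) m, by omega⟩ := by
          apply Fin.ext
          rw [Fin.val_succ, Fin.coe_castSucc]
          show (j : ℕ) + 1 = min ((j : ℕ) + 1) m
          have := j.isLt; omega
        rw [hsucc, Fin.snoc_castSucc, hstep ⟨min ((j : ℕ) + 1) m, by omega⟩ (by
          apply Fin.ext; rw [hτval]
          show (j : ℕ) = if min ((j : ℕ) + 1) m < (i₀ : ℕ) then min ((j : ℕ) + 1) m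
            else if min ((j : ℕ) + 1) m = (i₀ : ℕ) then m else min ((j : ℕ) + 1) m - 1
          have := j.isLt
          rw [if_neg (by omega), if_neg (by omega)]; omega)]

lemma wedge_eq_zero_of_coord {Q : Type*} [AddCommGroup Q] [Module ℝ Q] {n : ℕ}
    {v : Fin n → Q} {j : Fin n} (h : v j = 0) : wedge n v = 0 := by
  apply Subtype.ext
  show ExteriorAlgebra.ιMulti ℝ n v = 0
  exact AlternatingMap.map_coord_zero _ j h

lemma wedge_eq_zero_of_eq {Q : Type*} [AddCommGroup Q] [Module ℝ Q] {n : ℕ}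
    (v : Fin n → Q) {i j : Fin n} (h : v i = v j) (hij : i ≠ j) : wedge n v = 0 := by
  apply Subtype.ext
  show ExteriorAlgebra.ιMulti ℝ n v = 0
  exact AlternatingMap.map_eq_zero_of_eq _ v h hij

lemma multisymp_snoc (n k : ℕ) (X : Fin n → phaseSpace n k) (Y : phaseSpace n k) :
    multisymp n k (Fin.snoc X Y) =
      (∑ i : Fin n, (-1 : ℝ) ^ (i : ℕ) * (X i).2
        (wedge n (fun j => ((Fin.snoc X Y : Fin (n+1) → phaseSpace n k)
          ((Fin.castSucc i).succAbove j)).1)))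
      + (-1 : ℝ) ^ n * Y.2 (wedge n (fun j => (X j).1)) := by
  rw [multisymp, Fin.sum_univ_castSucc]
  congr 1
  · apply Finset.sum_congr rfl
    intro i _
    rw [Fin.snoc_castSucc, Fin.coe_castSucc]
  · rw [Fin.snoc_last, Fin.val_last]
    have : (fun j => ((Fin.snoc X Y : Fin (n+1) → phaseSpace n k)
        ((Fin.last n).succAbove j)).1) = fun j => (X j).1 := by
      funext j
      rw [Fin.succAbove_last, Fin.snoc_castSucc]
    rw [this]

lemma multisymp_snoc_vert (n k : ℕ) (X : Fin n → phaseSpace n k)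
    (π : Module.Dual ℝ (⋀[ℝ]^n (Fin (n + k) → ℝ))) :
    multisymp n k (Fin.snoc X (0, π)) = (-1 : ℝ) ^ n * π (wedge n (fun j => (X j).1)) := by
  rw [multisymp_snoc]
  have : ∀ i : Fin n, (-1 : ℝ) ^ (i : ℕ) * (X i).2
      (wedge n (fun j => ((Fin.snoc X (0, π) : Fin (n+1) → phaseSpace n k)
        ((Fin.castSucc i).succAbove j)).1)) = 0 := by
    intro i
    obtain ⟨j₀, hj₀⟩ := Fin.exists_succAbove_eq (Fin.castSucc_lt_last i).ne'
    have hz : ((Fin.snoc X (0, π) : Fin (n+1) → phaseSpace n k)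
        ((Fin.castSucc i).succAbove j₀)).1 = 0 := by
      rw [hj₀, Fin.snoc_last]
    rw [wedge_eq_zero_of_coord hz, map_zero, mul_zero]
  rw [Finset.sum_eq_zero (fun i _ => this i), zero_add]


lemma multisymp_snoc_self (n k : ℕ) (X : Fin n → phaseSpace n k) (i₀ : Fin n) :
    multisymp n k (Fin.snoc X (X i₀)) = 0 := by
  have hn : 0 < n := i₀.pos
  rw [multisymp_snoc]
  have hterm : ∀ i ∈ Finset.univ, i ≠ i₀ → (-1 : ℝ) ^ (i : ℕ) * (X i).2
      (wedge n (fun j => ((Fin.snoc X (X i₀) : Fin (n+1) → phaseSpace n k)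
        ((Fin.castSucc i).succAbove j)).1)) = 0 := by
    intro i _ hi
    obtain ⟨j₁, hj₁⟩ := Fin.exists_succAbove_eq
      (show Fin.castSucc i₀ ≠ Fin.castSucc i from fun h => hi (Fin.castSucc_injective _ h).symm)
    obtain ⟨j₂, hj₂⟩ := Fin.exists_succAbove_eq (Fin.castSucc_lt_last i).ne'
    have hne : j₁ ≠ j₂ := by
      intro h
      rw [h, hj₂] at hj₁
      exact (Fin.castSucc_lt_last i₀).ne (hj₁.symm)
    have heq : ((Fin.snoc X (X i₀) : Fin (n+1) → phaseSpace n k)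
          ((Fin.castSucc i).succAbove j₁)).1
        = ((Fin.snoc X (X i₀) : Fin (n+1) → phaseSpace n k)
          ((Fin.castSucc i).succAbove j₂)).1 := by
      rw [hj₁, hj₂, Fin.snoc_castSucc, Fin.snoc_last]
    rw [wedge_eq_zero_of_eq _ heq hne, map_zero, mul_zero]
  rw [Finset.sum_eq_single_of_mem i₀ (Finset.mem_univ _) hterm]
  obtain ⟨σ, hsign, hperm⟩ := snoc_succAbove_perm n i₀ X
  have htup : (fun j => ((Fin.snoc X (X i₀) : Fin (n+1) → phaseSpace n k)
      ((Fin.castSucc i₀).succAbove j)).1) = (fun j => (X j).1) ∘ σ := by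
    funext j
    exact congrArg Prod.fst (congrFun hperm j)
  rw [htup]
  have hsmul : wedge n ((fun j => (X j).1) ∘ σ)
      = (-1 : ℝ) ^ ((n - 1) - (i₀ : ℕ)) • wedge n (fun j => (X j).1) := by
    apply Subtype.ext
    show ExteriorAlgebra.ιMulti ℝ n ((fun j => (X j).1) ∘ σ)
      = ((-1 : ℝ) ^ ((n - 1) - (i₀ : ℕ)) • wedge n (fun j => (X j).1) : ⋀[ℝ]^n _)
    rw [AlternatingMap.map_perm, hsign]
    have : ((((-1 : ℤˣ) ^ ((n - 1) - (i₀ : ℕ))) : ℤˣ) •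
        (ExteriorAlgebra.ιMulti ℝ n (fun j => (X j).1)))
        = ((-1 : ℤ) ^ ((n - 1) - (i₀ : ℕ))) •
        (ExteriorAlgebra.ιMulti ℝ n (fun j => (X j).1)) := by
      rw [Units.smul_def]
      norm_num
    rw [this]
    have h2 : ((-1 : ℤ) ^ ((n - 1) - (i₀ : ℕ))) •
        (ExteriorAlgebra.ιMulti ℝ n (fun j => (X j).1))
        = (((-1 : ℤ) ^ ((n - 1) - (i₀ : ℕ)) : ℤ) : ℝ) •
        (ExteriorAlgebra.ιMulti ℝ n (fun j => (X j).1)) := by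
      rw [Int.cast_smul_eq_zsmul]
    rw [h2]
    push_cast
    rfl
  rw [hsmul, map_smul]
  have hval : (X i₀).2 (wedge n fun j => (X j).1) = (X i₀).2 (wedge n fun j => (X j).1) := rfl
  set c := (X i₀).2 (wedge n fun j => (X j).1)
  have : (-1 : ℝ) ^ (i₀ : ℕ) * ((-1 : ℝ) ^ ((n - 1) - (i₀ : ℕ)) • c)
      = (-1 : ℝ) ^ (n - 1) * c := by
    rw [smul_eq_mul, ← mul_assoc, ← pow_add]
    congr 2
    have := i₀.isLt
    omega
  rw [this]
  have : (-1 : ℝ) ^ n = -((-1 : ℝ) ^ (n - 1)) := by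
    conv_lhs => rw [show n = (n - 1) + 1 from by omega]
    rw [pow_succ]
    ring
  rw [this]
  ring

lemma linearIndependent_of_ιMulti_ne_zero {Q : Type*} [AddCommGroup Q] [Module ℝ Q]
    {n : ℕ} {v : Fin n → Q} (h : ExteriorAlgebra.ιMulti ℝ n v ≠ 0) :
    LinearIndependent ℝ v := by
  by_contra hc
  exact h (AlternatingMap.map_linearDependent _ v hc)

lemma span_le_of_ιMulti_eq {Q : Type*} [AddCommGroup Q] [Module ℝ Q]
    {n : ℕ} {v v' : Fin n → Q} (h : ExteriorAlgebra.ιMulti ℝ n v = ExteriorAlgebra.ιMulti ℝ n v')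
    (hne : ExteriorAlgebra.ιMulti ℝ n v ≠ 0) :
    Submodule.span ℝ (Set.range v') ≤ Submodule.span ℝ (Set.range v) := by
  have hv : LinearIndependent ℝ v := linearIndependent_of_ιMulti_ne_zero hne
  rw [Submodule.span_le]
  rintro x ⟨j, rfl⟩
  by_contra hmem
  have hcons : LinearIndependent ℝ (Fin.cons (v' j) v : Fin (n+1) → Q) :=
    linearIndependent_fin_cons.mpr ⟨hv, hmem⟩
  apply ιMulti_ne_zero_of_linearIndependent hcons
  have e1 : ExteriorAlgebra.ιMulti ℝ (n+1) (Fin.cons (v' j) v : Fin (n+1) → Q)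
      = ExteriorAlgebra.ι ℝ (v' j) * ExteriorAlgebra.ιMulti ℝ n v := by
    rw [ExteriorAlgebra.ιMulti_succ_apply]
    rfl
  have e2 : ExteriorAlgebra.ιMulti ℝ (n+1) (Fin.cons (v' j) v' : Fin (n+1) → Q)
      = ExteriorAlgebra.ι ℝ (v' j) * ExteriorAlgebra.ιMulti ℝ n v' := by
    rw [ExteriorAlgebra.ιMulti_succ_apply]
    rfl
  rw [e1, h, ← e2]
  apply AlternatingMap.map_eq_zero_of_eq _ _ (i := 0) (j := Fin.succ j)
  · rw [Fin.cons_zero, Fin.cons_succ]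
  · exact (Fin.succ_ne_zero j).symm

/-- Lemma 4.1 (iii) of the paper, invariant form: writing `a = λ η + b ∘ pr_Q`,
the form `a` is a point-slice iff `b` does not vanish on the horizontal space `S` of the
frames, and is co-isotropic iff `b` vanishes on `S`; in particular `η` itself vanishes on
the span of every Hamiltonian `n`-frame for `η`. -/
theorem statement9 (n k : ℕ) (hn : 1 ≤ n) (hk : 1 ≤ k)
    (η : Module.Dual ℝ (phaseSpace n k))
    (hηP : ∃ π : Module.Dual ℝ (⋀[ℝ]^n (Fin (n + k) → ℝ)), η (0, π) ≠ 0)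
    (X₀ : Fin n → phaseSpace n k) (hX₀ : IsHamFrame n k η X₀)
    (S : Submodule ℝ (Fin (n + k) → ℝ))
    (hS : S = Submodule.span ℝ (Set.range (fun i => (X₀ i).1)))
    (lam : ℝ) (b : Module.Dual ℝ (Fin (n + k) → ℝ))
    (a : Module.Dual ℝ (phaseSpace n k))
    (ha : a = lam • η + b ∘ₗ LinearMap.fst ℝ (Fin (n + k) → ℝ)
      (Module.Dual ℝ (⋀[ℝ]^n (Fin (n + k) → ℝ)))) :
    ((∀ X : Fin n → phaseSpace n k, IsHamFrame n k η X →
        ∃ w ∈ Submodule.span ℝ (Set.range X), a w ≠ 0) ↔ ∃ s ∈ S, b s ≠ 0) ∧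
    ((∀ X : Fin n → phaseSpace n k, IsHamFrame n k η X →
        ∀ w ∈ Submodule.span ℝ (Set.range X), a w = 0) ↔ ∀ s ∈ S, b s = 0) ∧
    (∀ X : Fin n → phaseSpace n k, IsHamFrame n k η X →
        ∀ w ∈ Submodule.span ℝ (Set.range X), η w = 0) := by
  subst hS
  set Q := (Fin (n + k) → ℝ)
  set P := Module.Dual ℝ (⋀[ℝ]^n Q)
  -- the wedge of the Q-projections of a frame pairs with any π to give η (0, π)
  have hπw : ∀ X : Fin n → phaseSpace n k, IsHamFrame n k η X →
      ∀ π : P, π (wedge n (fun j => (X j).1)) = η (0, π) := by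
    intro X hX π
    have h1 := hX.2 (0, π)
    rw [multisymp_snoc_vert] at h1
    exact mul_left_cancel₀ (pow_ne_zero n (by norm_num : (-1 : ℝ) ≠ 0)) h1
  -- η vanishes on the span of every frame
  have hηzero : ∀ X : Fin n → phaseSpace n k, IsHamFrame n k η X →
      ∀ w ∈ Submodule.span ℝ (Set.range X), η w = 0 := by
    intro X hX
    have hXi : ∀ i, η (X i) = 0 := by
      intro i
      have h1 := hX.2 (X i)
      rw [multisymp_snoc_self] at h1
      have := (mul_eq_zero.mp h1.symm).resolve_left
        (pow_ne_zero n (by norm_num : (-1 : ℝ) ≠ 0))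
      exact this
    have : Submodule.span ℝ (Set.range X) ≤ LinearMap.ker η := by
      rw [Submodule.span_le]
      rintro x ⟨i, rfl⟩
      exact hXi i
    intro w hw
    exact this hw
  -- the wedges of the projections of all frames agree
  have hwedge : ∀ X : Fin n → phaseSpace n k, IsHamFrame n k η X →
      wedge n (fun j => (X j).1) = wedge n (fun j => (X₀ j).1) := by
    intro X hX
    have hsub : ∀ π : P, π (wedge n (fun j => (X j).1) - wedge n (fun j => (X₀ j).1)) = 0 := by
      intro π
      rw [map_sub, hπw X hX π, hπw X₀ hX₀ π, sub_self]
    have := (Module.forall_dual_apply_eq_zero_iff ℝ _).mp hsub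
    exact sub_eq_zero.mp this
  obtain ⟨π₀, hπ₀⟩ := hηP
  have hne0 : ExteriorAlgebra.ιMulti ℝ n (fun j => (X₀ j).1) ≠ 0 := by
    intro hc
    have hw0 : wedge n (fun j => (X₀ j).1) = 0 := Subtype.ext hc
    have := hπw X₀ hX₀ π₀
    rw [hw0, map_zero] at this
    exact hπ₀ this.symm
  -- the span of the projections of every frame equals S
  have hspan : ∀ X : Fin n → phaseSpace n k, IsHamFrame n k η X →
      Submodule.span ℝ (Set.range (fun j => (X j).1))
        = Submodule.span ℝ (Set.range (fun j => (X₀ j).1)) := by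
    intro X hX
    have heq : ExteriorAlgebra.ιMulti ℝ n (fun j => (X j).1)
        = ExteriorAlgebra.ιMulti ℝ n (fun j => (X₀ j).1) :=
      Subtype.ext_iff.mp (hwedge X hX)
    refine le_antisymm ?_ ?_
    · exact span_le_of_ιMulti_eq heq.symm (heq ▸ hne0) |>.trans (le_refl _) |>.trans (le_refl _)
      |>.trans (le_refl _)
    · exact span_le_of_ιMulti_eq heq (heq ▸ hne0)
  -- projections of spans
  have hmap : ∀ X : Fin n → phaseSpace n k,
      Submodule.span ℝ (Set.range (fun j => (X j).1))
        = Submodule.map (LinearMap.fst ℝ Q P) (Submodule.span ℝ (Set.range X)) := by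
    intro X
    rw [Submodule.map_span]
    congr 1
    have : (fun j => (X j).1) = (LinearMap.fst ℝ Q P) ∘ X := rfl
    rw [this, Set.range_comp]
  -- on the span of a frame, a is given by b on the first coordinate
  have haw : ∀ X : Fin n → phaseSpace n k, IsHamFrame n k η X →
      ∀ w ∈ Submodule.span ℝ (Set.range X), a w = b w.1 := by
    intro X hX w hw
    rw [ha]
    show (lam • η + b ∘ₗ LinearMap.fst ℝ Q P) w = b w.1
    rw [LinearMap.add_apply, LinearMap.smul_apply, LinearMap.comp_apply,
      hηzero X hX w hw, smul_zero, zero_add]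
    rfl
  have hmem1 : ∀ X : Fin n → phaseSpace n k, IsHamFrame n k η X →
      ∀ w ∈ Submodule.span ℝ (Set.range X),
        w.1 ∈ Submodule.span ℝ (Set.range (fun i => (X₀ i).1)) := by
    intro X hX w hw
    rw [← hspan X hX, hmap X]
    exact Submodule.mem_map_of_mem hw
  have hmem2 : ∀ X : Fin n → phaseSpace n k, IsHamFrame n k η X →
      ∀ s ∈ Submodule.span ℝ (Set.range (fun i => (X₀ i).1)),
        ∃ w ∈ Submodule.span ℝ (Set.range X), w.1 = s := by
    intro X hX s hs
    rw [← hspan X hX, hmap X] at hs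
    obtain ⟨w, hw, hws⟩ := hs
    exact ⟨w, hw, hws⟩
  refine ⟨⟨?_, ?_⟩, ⟨?_, ?_⟩, hηzero⟩
  · intro h
    obtain ⟨w, hw, hane⟩ := h X₀ hX₀
    refine ⟨w.1, hmem1 X₀ hX₀ w hw, ?_⟩
    rw [← haw X₀ hX₀ w hw]
    exact hane
  · rintro ⟨s, hs, hbs⟩ X hX
    obtain ⟨w, hw, hws⟩ := hmem2 X hX s hs
    refine ⟨w, hw, ?_⟩
    rw [haw X hX w hw, hws]
    exact hbs
  · intro h s hs
    obtain ⟨w, hw, hws⟩ := hmem2 X₀ hX₀ s hs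
    rw [← hws, ← haw X₀ hX₀ w hw]
    exact h X₀ hX₀ w hw
  · intro h X hX w hw
    rw [haw X hX w hw]
    exact h w.1 (hmem1 X hX w hw)
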